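/- FX inverse-query value identity (from the proof of Lemma 11 of the paper): Fix y_{j+1} ∈ V with y_{j+1} ∉ {y₁, …, y_j} and s ∈ V with s ∉ {y₁ ⊕ k₂, …, y_j ⊕ k₂}. Let E' be the permutation of V determined by E'⁻¹ = E⁻¹ ∘ swap(y_{j+1} ⊕ k₂, s), and define E'^{T_r} by the same recursion with E replaced by E'. Then (E'^{T_j})⁻¹(y_{j+1} ⊕ k₂) = (E^{T_j})⁻¹(s); equivalently, the inverse FX oracle built from E'^{T_j} answers the (j+1)st inverse query y_{j+1} with (E'^{T_j})⁻¹(y_{j+1} ⊕ k₂) ⊕ k₁ = (E^{T_j})⁻¹(s) ⊕ k₁. -/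

import Mathlib

/-- The reprogrammed permutations `E^{T_i}` of the FX hybrid argument:
`E^{T_0} = E` and `E^{T_i} = swap(E^{T_{i-1}}(x_i ⊕ k₁), y_i ⊕ k₂) ∘ E^{T_{i-1}}`. -/
def fxReprog {V : Type*} [DecidableEq V] [Add V]
    (E : Equiv.Perm V) (k₁ k₂ : V) (x y : ℕ → V) : ℕ → Equiv.Perm V
  | 0 => E
  | i + 1 =>
      Equiv.swap (fxReprog E k₁ k₂ x y i (x (i + 1) + k₁)) (y (i + 1) + k₂) *
        fxReprog E k₁ k₂ x y i

/-- FX inverse-query value identity (from the proof of Lemma 11): for a fresh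
inverse query `y_{j+1}` and resampling point `s ∉ {y₁ ⊕ k₂, …, y_j ⊕ k₂}`, with
`E'⁻¹ = E⁻¹ ∘ swap(y_{j+1} ⊕ k₂, s)`, one has
`(E'^{T_j})⁻¹(y_{j+1} ⊕ k₂) = (E^{T_j})⁻¹(s)`; equivalently, the inverse FX
oracle built from `E'^{T_j}` answers the `(j+1)`st inverse query with
`(E'^{T_j})⁻¹(y_{j+1} ⊕ k₂) ⊕ k₁ = (E^{T_j})⁻¹(s) ⊕ k₁`. -/
theorem fx_inverse_query_value {n j : ℕ} (hn : 1 ≤ n)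
    (E : Equiv.Perm (Fin n → ZMod 2)) (k₁ k₂ : Fin n → ZMod 2)
    (x y : ℕ → Fin n → ZMod 2) (s : Fin n → ZMod 2)
    (hyj : ∀ i, 1 ≤ i → i ≤ j → y (j + 1) ≠ y i)
    (hs : ∀ i, 1 ≤ i → i ≤ j → s ≠ y i + k₂)
    (E' : Equiv.Perm (Fin n → ZMod 2))
    (hE' : E'⁻¹ = E⁻¹ * Equiv.swap (y (j + 1) + k₂) s) :
    (fxReprog E' k₁ k₂ x y j)⁻¹ (y (j + 1) + k₂) = (fxReprog E k₁ k₂ x y j)⁻¹ s ∧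
    (fxReprog E' k₁ k₂ x y j)⁻¹ (y (j + 1) + k₂) + k₁ =
        (fxReprog E k₁ k₂ x y j)⁻¹ s + k₁ := by
  set a := y (j + 1) + k₂ with ha
  have hE'eq : E' = Equiv.swap a s * E := by
    have h := congrArg (·⁻¹) hE'
    simpa [mul_inv_rev] using h
  set F := fxReprog E k₁ k₂ x y with hF
  set F' := fxReprog E' k₁ k₂ x y with hF'
  have hFsucc : ∀ r, F (r + 1) =
      Equiv.swap (F r (x (r + 1) + k₁)) (y (r + 1) + k₂) * F r := fun r => rfl
  have hF'succ : ∀ r, F' (r + 1) =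
      Equiv.swap (F' r (x (r + 1) + k₁)) (y (r + 1) + k₂) * F' r := fun r => rfl
  have key : ∀ r, r ≤ j →
      (F' r) ((F r)⁻¹ s) = a ∧
      ∀ i, r < i → i ≤ j → (F' r) ((F r)⁻¹ (y i + k₂)) = y i + k₂ := by
    intro r
    induction r with
    | zero =>
      intro _
      have hF0 : F 0 = E := rfl
      have hF'0 : F' 0 = E' := rfl
      rw [hF0, hF'0, hE'eq]
      constructor
      · simp [Equiv.Perm.mul_apply]
      · intro i h1 h2
        have hne1 : y i + k₂ ≠ a := by
          intro h
          exact hyj i h1 h2 (add_right_cancel h.symm)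
        have hne2 : y i + k₂ ≠ s := fun h => hs i h1 h2 h.symm
        simp [Equiv.Perm.mul_apply, Equiv.swap_apply_of_ne_of_ne hne1 hne2]
    | succ r ih =>
      intro hr
      obtain ⟨ih1, ih2⟩ := ih (Nat.le_of_succ_le hr)
      set u := F r (x (r + 1) + k₁) with hu
      set u' := F' r (x (r + 1) + k₁) with hu'
      set v := y (r + 1) + k₂ with hv
      have happ : ∀ z, (F' (r + 1)) ((F (r + 1))⁻¹ z) =
          Equiv.swap u' v ((F' r) ((F r)⁻¹ (Equiv.swap u v z))) := by
        intro z
        rw [hFsucc, hF'succ, ← hu, ← hu', ← hv, mul_inv_rev, Equiv.swap_inv]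
        simp [Equiv.Perm.mul_apply]
      have huu' : (F' r) ((F r)⁻¹ u) = u' := by
        rw [hu]; exact congrArg (F' r) ((F r).symm_apply_apply _)
      have hinj : ∀ p q, (F' r) ((F r)⁻¹ p) = (F' r) ((F r)⁻¹ q) → p = q := by
        intro p q h
        have := (F r)⁻¹.injective ((F' r).injective h)
        simpa using this
      have hsv : s ≠ v := hs (r + 1) (Nat.le_add_left 1 r) hr
      have hav : a ≠ v := by
        intro h
        exact hyj (r + 1) (Nat.le_add_left 1 r) hr (add_right_cancel h)
      have hFrv : (F' r) ((F r)⁻¹ v) = v :=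
        ih2 (r + 1) (Nat.lt_succ_self r) hr
      constructor
      · rw [happ]
        by_cases hsu : s = u
        · rw [hsu, Equiv.swap_apply_left, hFrv]
          have : u' = a := by rw [← huu', ← hsu, ih1]
          rw [this, Equiv.swap_apply_right]
        · rw [Equiv.swap_apply_of_ne_of_ne hsu hsv, ih1]
          have hau' : a ≠ u' := by
            intro h
            exact hsu (hinj s u (by rw [ih1, huu', ← h]))
          exact Equiv.swap_apply_of_ne_of_ne hau' hav
      · intro i hi1 hi2
        rw [happ]
        set w := y i + k₂ with hw
        have hiw : (F' r) ((F r)⁻¹ w) = w :=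
          ih2 i (Nat.lt_of_succ_lt hi1) hi2
        by_cases hwv : w = v
        · rw [hwv, Equiv.swap_apply_right, huu', Equiv.swap_apply_left, ← hwv]
        · by_cases hwu : w = u
          · rw [hwu, Equiv.swap_apply_left, hFrv]
            have : u' = w := by rw [← huu', ← hwu, hiw]
            rw [this, Equiv.swap_apply_right]
            exact hwu
          · rw [Equiv.swap_apply_of_ne_of_ne hwu hwv, hiw]
            have hwu' : w ≠ u' := by
              intro h
              exact hwu (hinj w u (by rw [hiw, huu', ← h]))
            exact Equiv.swap_apply_of_ne_of_ne hwu' hwv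
  obtain ⟨h1, -⟩ := key j le_rfl
  have hmain : (F' j)⁻¹ a = (F j)⁻¹ s := by
    conv_lhs => rw [← h1]
    exact (F' j).symm_apply_apply _
  exact ⟨hmain, by rw [hmain]⟩
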